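/- Let n, k, d ≥ 1, let m ∈ {0, 1/2, 1}^{n×k} with moment matrix M, and let 𝒮 be a collection of subsets of [n], each of size at most d − 1, such that the rows {M_S : S ∈ 𝒮} have full column rank k. Then for every v ∈ ℝ^k, max_{S ∈ 𝒮} |M_S · v| ≥ (2^{−(d−1)k} / k!) · max_{j∈[k]} |v_j|. In particular, the minimal L∞ singular value σ^∞_min of the matrix formed by these rows, defined as min over nonzero v of ‖·v‖_∞/‖v‖_∞, is at least 2^{−(d−1)k}/k! (which is 2^{−O(dk)}·k^{−O(k)}). -/

import Mathlib

open Matrix Finset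

/-- if `m` is `{0,1/2,1}`-valued and `𝒮` is a collection of subsets of `[n]`,
each of size at most `d - 1`, such that the rows `{M_S : S ∈ 𝒮}` of the moment matrix have
full column rank `k`, then for every `v ∈ ℝ^k`,
`max_{S ∈ 𝒮} |M_S · v| ≥ (2^{-(d-1)k}/k!) · max_j |v_j|`. -/
theorem stmt_8 (n k d : ℕ) (hn : 1 ≤ n) (hk : 1 ≤ k) (hd : 1 ≤ d)
    (m : Fin n → Fin k → ℝ)
    (hm : ∀ i j, m i j = 0 ∨ m i j = 1/2 ∨ m i j = 1)
    (𝒮 : Finset (Finset (Fin n))) (h𝒮 : ∀ S ∈ 𝒮, S.card ≤ d - 1)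
    (hrank : LinearIndependent ℝ
      (fun j : Fin k => fun S : {S : Finset (Fin n) // S ∈ 𝒮} => ∏ i ∈ S.1, m i j)) :
    ∀ v : Fin k → ℝ, ∃ S ∈ 𝒮, ∀ j0 : Fin k,
      1 / ((2:ℝ) ^ ((d - 1) * k) * (Nat.factorial k)) * |v j0|
        ≤ |∑ j, (∏ i ∈ S, m i j) * v j| := by
  classical
  intro v
  set T := {S : Finset (Fin n) // S ∈ 𝒮} with hT
  set A : T → Fin k → ℝ := fun S j => ∏ i ∈ S.1, m i j with hA
  -- entry bounds
  have hnonneg : ∀ (S : Finset (Fin n)) (j : Fin k), 0 ≤ ∏ i ∈ S, m i j := by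
    intro S j
    refine Finset.prod_nonneg fun i _ => ?_
    rcases hm i j with h | h | h <;> rw [h] <;> norm_num
  have hle1 : ∀ (S : Finset (Fin n)) (j : Fin k), ∏ i ∈ S, m i j ≤ 1 := by
    intro S j
    refine Finset.prod_le_one (fun i _ => ?_) (fun i _ => ?_)
    · rcases hm i j with h | h | h <;> rw [h] <;> norm_num
    · rcases hm i j with h | h | h <;> rw [h] <;> norm_num
  -- integrality
  have hint : ∀ S ∈ 𝒮, ∀ j : Fin k, ∃ z : ℤ, (2:ℝ)^(d-1) * ∏ i ∈ S, m i j = z := by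
    intro S hS j
    refine ⟨2^(d-1-S.card) *
      ∏ i ∈ S, (if m i j = 0 then (0:ℤ) else if m i j = 1/2 then 1 else 2), ?_⟩
    have h1 : ((∏ i ∈ S, (if m i j = 0 then (0:ℤ) else if m i j = 1/2 then 1 else 2) : ℤ) : ℝ)
        = ∏ i ∈ S, (2 * m i j) := by
      push_cast
      refine Finset.prod_congr rfl fun i _ => ?_
      rcases hm i j with h | h | h <;> rw [h] <;> norm_num
    have h2 : ∏ i ∈ S, ((2:ℝ) * m i j) = 2^S.card * ∏ i ∈ S, m i j := by
      rw [Finset.prod_mul_distrib, Finset.prod_const]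
    have h3 : (d-1-S.card) + S.card = d-1 := Nat.sub_add_cancel (h𝒮 S hS)
    rw [Int.cast_mul, h1, h2]
    push_cast
    rw [← mul_assoc, ← pow_add, h3]
  -- row span is everything
  haveI : Fintype T := by unfold T; infer_instance
  set B : Matrix T (Fin k) ℝ := Matrix.of A with hB
  have hBt : LinearIndependent ℝ (fun j : Fin k => Bᵀ j) := hrank
  have hrk : Bᵀ.rank = k := by
    rw [LinearIndependent.rank_matrix (M := Bᵀ) hBt]; simp
  have hrkB : B.rank = k := by rw [← Matrix.rank_transpose]; exact hrk
  have hspan : Submodule.span ℝ (Set.range A) = ⊤ := by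
    apply Submodule.eq_top_of_finrank_eq
    have h1 : Module.finrank ℝ (Submodule.span ℝ (Set.range (fun i : T => B i))) = k := by
      exact (Matrix.rank_eq_finrank_span_row B).symm.trans hrkB
    have h2 : (Set.range (fun i : T => B i)) = Set.range A := rfl
    rw [← h2]
    rw [h1]
    simp
  -- extract a square invertible submatrix
  obtain ⟨b, hbsub, hbspan, hbind⟩ := exists_linearIndependent ℝ (Set.range A)
  rw [hspan] at hbspan
  haveI : Fintype b := hbind.setFinite.fintype
  let bas : Module.Basis b ℝ (Fin k → ℝ) := Module.Basis.mk hbind (by rw [Subtype.range_coe, hbspan])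
  have hcard : Fintype.card b = k := by
    have h1 := Module.finrank_eq_card_basis bas
    rw [Module.finrank_fin_fun] at h1
    omega
  let e : Fin k ≃ b := (Fintype.equivFinOfCardEq hcard).symm
  have hchoice : ∀ i : Fin k, ∃ S : T, A S = ((e i : b) : Fin k → ℝ) := fun i => hbsub (e i).2
  let g : Fin k → T := fun i => (hchoice i).choose
  have hg : ∀ i, A (g i) = ((e i : b) : Fin k → ℝ) := fun i => (hchoice i).choose_spec
  set C : Matrix (Fin k) (Fin k) ℝ := Matrix.of (fun i j => A (g i) j) with hC
  have hCrows : LinearIndependent ℝ (fun i : Fin k => C i) := by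
    have hfe : (fun i : Fin k => C i) = (fun i => ((e i : b) : Fin k → ℝ)) := by
      funext i; exact hg i
    rw [hfe]
    exact hbind.comp _ e.injective
  have hCdet : C.det ≠ 0 := by
    have h1 := Matrix.linearIndependent_rows_iff_isUnit.mp hCrows
    exact isUnit_iff_ne_zero.mp ((Matrix.isUnit_iff_isUnit_det C).mp h1)
  -- determinant lower bound
  have hCint : ∀ i j : Fin k, ∃ z : ℤ, (2:ℝ)^(d-1) * C i j = z :=
    fun i j => hint (g i).1 (g i).2 j
  set Cz : Matrix (Fin k) (Fin k) ℤ := Matrix.of (fun i j => (hCint i j).choose) with hCzdef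
  have hCz : ∀ i j, ((Cz i j : ℤ) : ℝ) = (2:ℝ)^(d-1) * C i j :=
    fun i j => ((hCint i j).choose_spec).symm
  have hdetCz : ((Cz.det : ℤ) : ℝ) = (2:ℝ)^((d-1)*k) * C.det := by
    have hmap : Cz.map (Int.cast : ℤ → ℝ) = ((2:ℝ)^(d-1)) • C := by
      ext i j
      simp only [Matrix.map_apply, Matrix.smul_apply, smul_eq_mul]
      exact hCz i j
    have h1 := RingHom.map_det (Int.castRingHom ℝ) Cz
    rw [RingHom.mapMatrix_apply, Int.coe_castRingHom, hmap] at h1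
    have h2 : ((Cz.det : ℤ) : ℝ) = ((2:ℝ)^(d-1) • C).det := h1
    rw [h2, Matrix.det_smul]
    simp [pow_mul]
  have hCzdet_ne : Cz.det ≠ 0 := by
    intro h
    rw [h] at hdetCz
    simp only [Int.cast_zero] at hdetCz
    have : (2:ℝ)^((d-1)*k) ≠ 0 := by positivity
    exact hCdet (by
      rcases mul_eq_zero.mp hdetCz.symm with h' | h'
      · exact absurd h' this
      · exact h')
  have hdetlb : 1 ≤ (2:ℝ)^((d-1)*k) * |C.det| := by
    have h1 : (1:ℝ) ≤ |((Cz.det : ℤ) : ℝ)| := by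
      rw [← Int.cast_abs]
      exact_mod_cast Int.one_le_abs hCzdet_ne
    rw [hdetCz, abs_mul, abs_of_nonneg (by positivity : (0:ℝ) ≤ (2:ℝ)^((d-1)*k))] at h1
    exact h1
  -- adjugate bound
  have hadj : ∀ j0 : Fin k, ∑ i, |C.adjugate j0 i| ≤ (Nat.factorial k : ℝ) := by
    intro j0
    have hbd : ∀ i : Fin k, |C.adjugate j0 i|
        ≤ ∑ σ : Equiv.Perm (Fin k), (if σ j0 = i then (1:ℝ) else 0) := by
      intro i
      rw [Matrix.adjugate_apply, Matrix.det_apply]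
      refine (Finset.abs_sum_le_sum_abs _ _).trans (Finset.sum_le_sum fun σ _ => ?_)
      have habs : |Equiv.Perm.sign σ • ∏ x, (C.updateRow i (Pi.single j0 1)) (σ x) x|
          = |∏ x, (C.updateRow i (Pi.single j0 1)) (σ x) x| := by
        rcases Int.units_eq_one_or (Equiv.Perm.sign σ) with h | h <;>
          rw [h] <;> simp [Units.smul_def]
      rw [habs]
      have hC0 : ∀ i' j' : Fin k, 0 ≤ C i' j' := fun i' j' => hnonneg (g i').1 j'
      have hC1 : ∀ i' j' : Fin k, C i' j' ≤ 1 := fun i' j' => hle1 (g i').1 j'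
      by_cases hc : σ j0 = i
      · rw [if_pos hc, Finset.abs_prod]
        refine Finset.prod_le_one (fun x _ => abs_nonneg _) (fun x _ => ?_)
        rw [Matrix.updateRow_apply]
        by_cases hx : σ x = i
        · rw [if_pos hx, Pi.single_apply]
          by_cases hxj : x = j0 <;> simp [hxj]
        · rw [if_neg hx, abs_of_nonneg (hC0 _ _)]
          exact hC1 _ _
      · rw [if_neg hc]
        have hzero : (C.updateRow i (Pi.single j0 1)) (σ (σ.symm i)) (σ.symm i) = 0 := by
          rw [Equiv.apply_symm_apply, Matrix.updateRow_self, Pi.single_apply,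
            if_neg (fun h => hc (by rw [← h, Equiv.apply_symm_apply]))]
        have hprod : ∏ x, (C.updateRow i (Pi.single j0 1)) (σ x) x = 0 :=
          Finset.prod_eq_zero (Finset.mem_univ (σ.symm i)) hzero
        rw [abs_eq_zero.mpr hprod]
    calc ∑ i, |C.adjugate j0 i|
        ≤ ∑ i, ∑ σ : Equiv.Perm (Fin k), (if σ j0 = i then (1:ℝ) else 0) :=
          Finset.sum_le_sum fun i _ => hbd i
      _ = ∑ σ : Equiv.Perm (Fin k), ∑ i, (if σ j0 = i then (1:ℝ) else 0) := Finset.sum_comm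
      _ = ∑ σ : Equiv.Perm (Fin k), (1:ℝ) := by
          refine Finset.sum_congr rfl fun σ _ => ?_
          rw [Finset.sum_ite_eq Finset.univ (σ j0) (fun _ => (1:ℝ))]
          simp
      _ = (Nat.factorial k : ℝ) := by
          simp [Finset.card_univ, Fintype.card_perm]
  -- Cramer / adjugate identity
  set w : Fin k → ℝ := C.mulVec v with hw
  have hkey : ∀ j0 : Fin k, C.det * v j0 = ∑ i, C.adjugate j0 i * w i := by
    intro j0
    have h2 : (C.adjugate).mulVec (C.mulVec v) = C.det • v := by
      rw [Matrix.mulVec_mulVec, Matrix.adjugate_mul, Matrix.smul_mulVec,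
        Matrix.one_mulVec]
    have h3 := congrFun h2 j0
    simp only [Matrix.mulVec, dotProduct, Pi.smul_apply, smul_eq_mul] at h3
    rw [← h3]
    rfl
  -- pick maximizing row
  haveI : Nonempty (Fin k) := ⟨⟨0, hk⟩⟩
  obtain ⟨i0, -, hmax⟩ := Finset.exists_max_image Finset.univ (fun i => |w i|)
    Finset.univ_nonempty
  refine ⟨(g i0).1, (g i0).2, fun j0 => ?_⟩
  have hgoal_eq : ∑ j, (∏ i ∈ (g i0).1, m i j) * v j = w i0 := rfl
  rw [hgoal_eq]
  have hfac : (0:ℝ) < (Nat.factorial k : ℝ) := by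
    exact_mod_cast Nat.factorial_pos k
  have hA1 : |C.det| * |v j0| ≤ (Nat.factorial k : ℝ) * |w i0| := by
    calc |C.det| * |v j0| = |∑ i, C.adjugate j0 i * w i| := by rw [← abs_mul, hkey j0]
      _ ≤ ∑ i, |C.adjugate j0 i * w i| := Finset.abs_sum_le_sum_abs _ _
      _ ≤ ∑ i, |C.adjugate j0 i| * |w i0| := Finset.sum_le_sum fun i _ => by
          rw [abs_mul]
          exact mul_le_mul_of_nonneg_left (hmax i (Finset.mem_univ i)) (abs_nonneg _)
      _ = (∑ i, |C.adjugate j0 i|) * |w i0| := by rw [← Finset.sum_mul]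
      _ ≤ (Nat.factorial k : ℝ) * |w i0| :=
          mul_le_mul_of_nonneg_right (hadj j0) (abs_nonneg _)
  have hmain : |v j0| ≤ |w i0| * ((2:ℝ)^((d-1)*k) * (Nat.factorial k : ℝ)) := by
    calc |v j0| = 1 * |v j0| := (one_mul _).symm
      _ ≤ ((2:ℝ)^((d-1)*k) * |C.det|) * |v j0| :=
          mul_le_mul_of_nonneg_right hdetlb (abs_nonneg _)
      _ = (2:ℝ)^((d-1)*k) * (|C.det| * |v j0|) := by ring
      _ ≤ (2:ℝ)^((d-1)*k) * ((Nat.factorial k : ℝ) * |w i0|) :=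
          mul_le_mul_of_nonneg_left hA1 (by positivity)
      _ = |w i0| * ((2:ℝ)^((d-1)*k) * (Nat.factorial k : ℝ)) := by ring
  rw [one_div_mul_eq_div, div_le_iff₀ (by positivity)]
  exact hmain
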